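/- (Probabilistic Azuma–Hoeffding) Let X₀, X₁, ..., X_n be a real-valued martingale with X₀ constant, and suppose there are constants b_i, c_i > 0 and r ∈ [0,1] such that: (i) for each 0 ≤ i < n, P(|X_{i+1} − X_i| > c_i) ≤ r, and (ii) |X_{i+1} − X_i| ≤ b_i almost surely, and (iii) b_i · r^{1/2} ≤ c_i for all i. Then for any δ ∈ (0,1), P( |X_n − X₀| > sqrt(32 (Σ_{i=1}^n c_i²) log(2/δ)) + Σ_{i=0}^{n−1} b_i r^{1/2} ) < δ + 2n r^{1/2}. -/

import Mathlib

open MeasureTheory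

open MeasureTheory Real

namespace AzAux

variable {Ω : Type*} {m mΩ : MeasurableSpace Ω} {μ : Measure Ω} [IsProbabilityMeasure μ]

lemma integrable_of_bound {f : Ω → ℝ} (hf : AEStronglyMeasurable f μ) (C : ℝ)
    (h : ∀ᵐ ω ∂μ, |f ω| ≤ C) : Integrable f μ :=
  ⟨hf, HasFiniteIntegral.of_bounded (C := C) (by
    filter_upwards [h] with ω hω; simpa [Real.norm_eq_abs] using hω)⟩

omit [IsProbabilityMeasure μ] in
lemma abs_condexp_le {f g : Ω → ℝ} (hf : Integrable f μ) (hg : Integrable g μ)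
    (h : ∀ᵐ ω ∂μ, |f ω| ≤ g ω) : ∀ᵐ ω ∂μ, |(μ[f|m]) ω| ≤ (μ[g|m]) ω := by
  have h1 : μ[f|m] ≤ᵐ[μ] μ[g|m] :=
    condExp_mono hf hg (by filter_upwards [h] with ω hω; exact (abs_le.mp hω).2)
  have h2 : μ[-f|m] ≤ᵐ[μ] μ[g|m] := by
    refine condExp_mono hf.neg hg ?_
    filter_upwards [h] with ω hω
    simpa using (neg_le.mp (abs_le.mp hω).1)
  have h3 := condExp_neg (μ := μ) (m := m) f
  filter_upwards [h1, h2, h3] with ω e1 e2 e3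
  rw [e3] at e2
  simp only [Pi.neg_apply] at e2
  exact abs_le.mpr ⟨by linarith, e1⟩

lemma abs_condexp_le_const (hm : m ≤ mΩ) {f : Ω → ℝ} (C : ℝ) (hf : Integrable f μ)
    (h : ∀ᵐ ω ∂μ, |f ω| ≤ C) : ∀ᵐ ω ∂μ, |(μ[f|m]) ω| ≤ C := by
  have h0 := abs_condexp_le (m := m) hf (integrable_const C) h
  have hc : μ[(fun _ => C : Ω → ℝ)|m] = fun _ => C := condExp_const hm C
  filter_upwards [h0] with ω h1
  rwa [hc] at h1


variable {Ω : Type*} {m mΩ : MeasurableSpace Ω} {μ : Measure Ω} [IsProbabilityMeasure μ]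

-- pointwise convexity bound
lemma exp_le_lin {z a l : ℝ} (ha : 0 < a) (hz : |z| ≤ a) :
    exp (l * z) ≤ cosh (l * a) + (sinh (l * a) / a) * z := by
  have hs : (0:ℝ) ≤ (a - z) / (2 * a) := by
    apply div_nonneg (by linarith [(abs_le.mp hz).2]) (by linarith)
  have ht : (0:ℝ) ≤ (a + z) / (2 * a) := by
    apply div_nonneg (by linarith [(abs_le.mp hz).1]) (by linarith)
  have hst : (a - z) / (2 * a) + (a + z) / (2 * a) = 1 := by
    field_simp; ring
  have hkey := convexOn_exp.2 (Set.mem_univ (-(l * a))) (Set.mem_univ (l * a)) hs ht hst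
  have ha0 : a ≠ 0 := ha.ne'
  simp only [smul_eq_mul] at hkey
  have hcomb : (a - z) / (2 * a) * -(l * a) + (a + z) / (2 * a) * (l * a) = l * z := by
    field_simp; ring
  rw [hcomb] at hkey
  refine hkey.trans (le_of_eq ?_)
  rw [Real.cosh_eq, Real.sinh_eq]
  field_simp
  ring

lemma condexp_exp_le (hm : m ≤ mΩ) {Z : Ω → ℝ} (hZm : AEStronglyMeasurable Z μ)
    (hZ0 : μ[Z|m] =ᵐ[μ] 0) {a : ℝ} (ha : 0 < a) (hZa : ∀ᵐ ω ∂μ, |Z ω| ≤ a) (l : ℝ) :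
    ∀ᵐ ω ∂μ, (μ[fun ω => exp (l * Z ω)|m]) ω ≤ exp (l ^ 2 * a ^ 2 / 2) := by
  set W : Ω → ℝ := fun ω => cosh (l * a) + (sinh (l * a) / a) * Z ω with hW
  have hZint : Integrable Z μ := integrable_of_bound hZm a hZa
  have hfint : Integrable (fun ω => exp (l * Z ω)) μ := by
    refine integrable_of_bound ((Real.continuous_exp.comp_aestronglyMeasurable (hZm.const_mul l))) (exp (|l| * a)) ?_
    filter_upwards [hZa] with ω hω
    rw [abs_of_pos (exp_pos _), exp_le_exp]
    calc l * Z ω ≤ |l * Z ω| := le_abs_self _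
      _ = |l| * |Z ω| := abs_mul _ _
      _ ≤ |l| * a := by gcongr
  have hWint : Integrable W μ := (integrable_const _).add (hZint.const_mul _)
  have step1 : μ[fun ω => exp (l * Z ω)|m] ≤ᵐ[μ] μ[W|m] := by
    refine condExp_mono hfint hWint ?_
    filter_upwards [hZa] with ω hω
    exact exp_le_lin ha hω
  have step2 : μ[W|m] =ᵐ[μ] fun _ => cosh (l * a) := by
    have : W = (fun _ => cosh (l * a)) + (sinh (l * a) / a) • Z := by
      funext ω; simp [hW, smul_eq_mul]
    rw [this]
    calc μ[(fun _ => cosh (l * a)) + (sinh (l * a) / a) • Z|m]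
        =ᵐ[μ] μ[(fun _ => cosh (l * a) : Ω → ℝ)|m] + μ[(sinh (l * a) / a) • Z|m] :=
          condExp_add (integrable_const _) (hZint.smul _) _
      _ =ᵐ[μ] (fun _ => cosh (l * a)) + (sinh (l * a) / a) • μ[Z|m] := by
          rw [condExp_const hm]
          exact Filter.EventuallyEq.add (Filter.EventuallyEq.refl _ _) (condExp_smul _ _ _)
      _ =ᵐ[μ] fun _ => cosh (l * a) := by
          filter_upwards [hZ0] with ω h0
          simp [h0]
  filter_upwards [step1, step2] with ω e1 e2
  rw [e2] at e1
  refine e1.trans ((Real.cosh_le_exp_half_sq _).trans (le_of_eq ?_))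
  congr 1; ring


lemma integral_exp_sum_le (ℱ : Filtration ℕ mΩ) (Z : ℕ → Ω → ℝ) (a : ℕ → ℝ)
    (ha : ∀ i, 0 < a i)
    (hZm : ∀ i, StronglyMeasurable[ℱ (i+1)] (Z i))
    (hZ0 : ∀ i, μ[Z i | ℱ i] =ᵐ[μ] 0)
    (hZa : ∀ i, ∀ᵐ ω ∂μ, |Z i ω| ≤ a i) (l : ℝ) :
    ∀ n, ∫ ω, exp (l * ∑ i ∈ Finset.range n, Z i ω) ∂μ
      ≤ exp (l ^ 2 * (∑ i ∈ Finset.range n, (a i) ^ 2) / 2) := by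
  have hSm : ∀ n, StronglyMeasurable[ℱ n] (fun ω => ∑ i ∈ Finset.range n, Z i ω) := by
    intro n
    apply Finset.stronglyMeasurable_fun_sum
    intro i hi
    exact (hZm i).mono (ℱ.mono (Finset.mem_range.mp hi))
  have hSb : ∀ n, ∀ᵐ ω ∂μ, |∑ i ∈ Finset.range n, Z i ω| ≤ ∑ i ∈ Finset.range n, a i := by
    intro n
    have := ae_all_iff.mpr hZa
    filter_upwards [this] with ω hω
    calc |∑ i ∈ Finset.range n, Z i ω| ≤ ∑ i ∈ Finset.range n, |Z i ω| :=
          Finset.abs_sum_le_sum_abs _ _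
      _ ≤ ∑ i ∈ Finset.range n, a i := Finset.sum_le_sum fun i _ => hω i
  have hfm : ∀ n, AEStronglyMeasurable (fun ω => exp (l * ∑ i ∈ Finset.range n, Z i ω)) μ :=
    fun n => Real.continuous_exp.comp_aestronglyMeasurable
      ((((hSm n).mono (ℱ.le n)).aestronglyMeasurable).const_mul l)
  have hfb : ∀ n, ∀ᵐ ω ∂μ, |exp (l * ∑ i ∈ Finset.range n, Z i ω)|
      ≤ exp (|l| * ∑ i ∈ Finset.range n, a i) := by
    intro n
    filter_upwards [hSb n] with ω hω
    rw [abs_of_pos (exp_pos _), exp_le_exp]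
    calc l * ∑ i ∈ Finset.range n, Z i ω ≤ |l * ∑ i ∈ Finset.range n, Z i ω| := le_abs_self _
      _ = |l| * |∑ i ∈ Finset.range n, Z i ω| := abs_mul _ _
      _ ≤ |l| * ∑ i ∈ Finset.range n, a i := by gcongr
  have hfint : ∀ n, Integrable (fun ω => exp (l * ∑ i ∈ Finset.range n, Z i ω)) μ :=
    fun n => integrable_of_bound (hfm n) _ (hfb n)
  intro n
  induction n with
  | zero => simp
  | succ n ih =>
    set S : Ω → ℝ := fun ω => ∑ i ∈ Finset.range n, Z i ω with hS
    set f : Ω → ℝ := fun ω => exp (l * S ω) with hf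
    set g : Ω → ℝ := fun ω => exp (l * Z n ω) with hg
    have hgint : Integrable g μ := by
      refine integrable_of_bound
        (Real.continuous_exp.comp_aestronglyMeasurable
          ((((hZm n).mono (ℱ.le _)).aestronglyMeasurable).const_mul l)) (exp (|l| * a n)) ?_
      filter_upwards [hZa n] with ω hω
      rw [abs_of_pos (exp_pos _), exp_le_exp]
      calc l * Z n ω ≤ |l * Z n ω| := le_abs_self _
        _ = |l| * |Z n ω| := abs_mul _ _
        _ ≤ |l| * a n := by gcongr
    have hpull : μ[f * g|ℱ n] =ᵐ[μ] f * μ[g|ℱ n] := by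
      refine condExp_stronglyMeasurable_mul_of_bound (ℱ.le n)
        (Real.continuous_exp.comp_stronglyMeasurable ((hSm n).const_mul l)) hgint (exp (|l| * ∑ i ∈ Finset.range n, a i)) ?_
      filter_upwards [hfb n] with ω hω
      rw [Real.norm_eq_abs]
      exact hω
    have hcond : ∀ᵐ ω ∂μ, (μ[g|ℱ n]) ω ≤ exp (l ^ 2 * (a n) ^ 2 / 2) :=
      condexp_exp_le (ℱ.le n) (((hZm n).mono (ℱ.le _)).aestronglyMeasurable)
        (hZ0 n) (ha n) (hZa n) l
    have heq1 : ∫ ω, exp (l * ∑ i ∈ Finset.range (n+1), Z i ω) ∂μ = ∫ ω, (f * g) ω ∂μ := by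
      congr 1; funext ω
      simp only [Finset.sum_range_succ, mul_add, Real.exp_add, hf, hg, hS, Pi.mul_apply]
    have heq2 : ∫ ω, (f * g) ω ∂μ = ∫ ω, (μ[f * g|ℱ n]) ω ∂μ :=
      (integral_condExp (ℱ.le n)).symm
    have hle : ∫ ω, (μ[f * g|ℱ n]) ω ∂μ ≤ ∫ ω, exp (l ^ 2 * (a n) ^ 2 / 2) * f ω ∂μ := by
      refine integral_mono_ae integrable_condExp ((hfint n).const_mul _) ?_
      filter_upwards [hpull, hcond] with ω e1 e2
      rw [e1]
      simp only [Pi.mul_apply]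
      calc f ω * (μ[g|ℱ n]) ω ≤ f ω * exp (l ^ 2 * (a n) ^ 2 / 2) := by
            apply mul_le_mul_of_nonneg_left e2 (le_of_lt (exp_pos _))
        _ = exp (l ^ 2 * (a n) ^ 2 / 2) * f ω := mul_comm _ _
    rw [heq1, heq2]
    refine hle.trans ?_
    rw [integral_const_mul]
    calc exp (l ^ 2 * a n ^ 2 / 2) * ∫ ω, f ω ∂μ
        ≤ exp (l ^ 2 * a n ^ 2 / 2) * exp (l ^ 2 * (∑ i ∈ Finset.range n, (a i) ^ 2) / 2) := by
          apply mul_le_mul_of_nonneg_left ih (le_of_lt (exp_pos _))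
      _ = exp (l ^ 2 * (∑ i ∈ Finset.range (n+1), (a i) ^ 2) / 2) := by
          rw [← Real.exp_add, Finset.sum_range_succ]
          congr 1; ring


lemma azuma_one_sided (ℱ : Filtration ℕ mΩ) (Z : ℕ → Ω → ℝ) (a : ℕ → ℝ)
    (ha : ∀ i, 0 < a i)
    (hZm : ∀ i, StronglyMeasurable[ℱ (i+1)] (Z i))
    (hZ0 : ∀ i, μ[Z i | ℱ i] =ᵐ[μ] 0)
    (hZa : ∀ i, ∀ᵐ ω ∂μ, |Z i ω| ≤ a i) (n : ℕ)
    (t : ℝ) (ht : 0 < t) :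
    μ {ω | t ≤ ∑ i ∈ Finset.range n, Z i ω}
      ≤ ENNReal.ofReal (exp (-(t ^ 2) / (2 * ∑ i ∈ Finset.range n, (a i) ^ 2))) := by
  set A : ℝ := ∑ i ∈ Finset.range n, (a i) ^ 2 with hA
  rcases Nat.eq_zero_or_pos n with hn | hn
  · subst hn
    simp only [Finset.range_zero, Finset.sum_empty] at *
    have : {ω : Ω | t ≤ (0:ℝ)} = ∅ := by
      ext ω; simp [not_le.mpr ht]
    rw [this, measure_empty]
    exact zero_le
  have hApos : 0 < A := by
    rw [hA]
    apply Finset.sum_pos (fun i _ => pow_pos (ha i) 2)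
    exact ⟨0, Finset.mem_range.mpr hn⟩
  set l : ℝ := t / A with hl
  have hl0 : 0 ≤ l := le_of_lt (div_pos ht hApos)
  have hSb : ∀ᵐ ω ∂μ, |∑ i ∈ Finset.range n, Z i ω| ≤ ∑ i ∈ Finset.range n, a i := by
    filter_upwards [ae_all_iff.mpr hZa] with ω hω
    calc |∑ i ∈ Finset.range n, Z i ω| ≤ ∑ i ∈ Finset.range n, |Z i ω| :=
          Finset.abs_sum_le_sum_abs _ _
      _ ≤ ∑ i ∈ Finset.range n, a i := Finset.sum_le_sum fun i _ => hω i
  have hfm : AEStronglyMeasurable (fun ω => exp (l * ∑ i ∈ Finset.range n, Z i ω)) μ := by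
    refine Real.continuous_exp.comp_aestronglyMeasurable ?_
    refine AEStronglyMeasurable.const_mul ?_ l
    refine ((Finset.stronglyMeasurable_fun_sum _ (fun i hi => ?_)).mono (ℱ.le n)).aestronglyMeasurable
    exact (hZm i).mono (ℱ.mono (Finset.mem_range.mp hi))
  have hfint : Integrable (fun ω => exp (l * ∑ i ∈ Finset.range n, Z i ω)) μ := by
    refine integrable_of_bound hfm (exp (|l| * ∑ i ∈ Finset.range n, a i)) ?_
    filter_upwards [hSb] with ω hω
    rw [abs_of_pos (exp_pos _), exp_le_exp]
    calc l * ∑ i ∈ Finset.range n, Z i ω ≤ |l * ∑ i ∈ Finset.range n, Z i ω| := le_abs_self _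
      _ = |l| * |∑ i ∈ Finset.range n, Z i ω| := abs_mul _ _
      _ ≤ |l| * ∑ i ∈ Finset.range n, a i := by gcongr
  have hcher := ProbabilityTheory.measure_ge_le_exp_mul_mgf
    (X := fun ω => ∑ i ∈ Finset.range n, Z i ω) (μ := μ) (t := l) t hl0 hfint
  have hmgf : ProbabilityTheory.mgf (fun ω => ∑ i ∈ Finset.range n, Z i ω) μ l
      ≤ exp (l ^ 2 * A / 2) := integral_exp_sum_le ℱ Z a ha hZm hZ0 hZa l n
  have hkey : (μ {ω | t ≤ ∑ i ∈ Finset.range n, Z i ω}).toReal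
      ≤ exp (-(t ^ 2) / (2 * A)) := by
    refine hcher.trans ?_
    calc exp (-l * t) * ProbabilityTheory.mgf (fun ω => ∑ i ∈ Finset.range n, Z i ω) μ l
        ≤ exp (-l * t) * exp (l ^ 2 * A / 2) := by
          apply mul_le_mul_of_nonneg_left hmgf (le_of_lt (exp_pos _))
      _ = exp (-(t ^ 2) / (2 * A)) := by
          rw [← Real.exp_add]
          congr 1
          rw [hl]
          field_simp
          ring
  calc μ {ω | t ≤ ∑ i ∈ Finset.range n, Z i ω}
      = ENNReal.ofReal (μ {ω | t ≤ ∑ i ∈ Finset.range n, Z i ω}).toReal :=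
        (ENNReal.ofReal_toReal (measure_ne_top μ _)).symm
    _ ≤ ENNReal.ofReal (exp (-(t ^ 2) / (2 * A))) := ENNReal.ofReal_le_ofReal hkey

lemma azuma_two_sided (ℱ : Filtration ℕ mΩ) (Z : ℕ → Ω → ℝ) (a : ℕ → ℝ)
    (ha : ∀ i, 0 < a i)
    (hZm : ∀ i, StronglyMeasurable[ℱ (i+1)] (Z i))
    (hZ0 : ∀ i, μ[Z i | ℱ i] =ᵐ[μ] 0)
    (hZa : ∀ i, ∀ᵐ ω ∂μ, |Z i ω| ≤ a i) (n : ℕ)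
    (t : ℝ) (ht : 0 < t) :
    μ {ω | t < |∑ i ∈ Finset.range n, Z i ω|}
      ≤ ENNReal.ofReal (2 * exp (-(t ^ 2) / (2 * ∑ i ∈ Finset.range n, (a i) ^ 2))) := by
  have hup := azuma_one_sided ℱ Z a ha hZm hZ0 hZa n t ht
  have hdown := azuma_one_sided ℱ (fun i => -Z i) a ha
    (fun i => (hZm i).neg)
    (fun i => by
      have h1 := condExp_neg (μ := μ) (m := ℱ i) (Z i)
      refine h1.trans ?_
      filter_upwards [hZ0 i] with ω hω
      simp only [Pi.neg_apply, hω, Pi.zero_apply, neg_zero])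
    (fun i => by filter_upwards [hZa i] with ω hω; simpa using hω) n t ht
  have hsub : {ω | t < |∑ i ∈ Finset.range n, Z i ω|}
      ⊆ {ω | t ≤ ∑ i ∈ Finset.range n, Z i ω}
        ∪ {ω | t ≤ ∑ i ∈ Finset.range n, (fun i => -Z i) i ω} := by
    intro ω hω
    simp only [Set.mem_setOf_eq] at hω ⊢
    rcases lt_abs.mp hω with h | h
    · exact Or.inl h.le
    · refine Or.inr ?_
      have he : ∑ i ∈ Finset.range n, -Z i ω = -∑ i ∈ Finset.range n, Z i ω := by
        simp
      show t ≤ ∑ i ∈ Finset.range n, -Z i ω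
      rw [he]
      exact h.le
  refine (measure_mono hsub).trans ((measure_union_le _ _).trans ?_)
  refine (add_le_add hup hdown).trans ?_
  rw [← ENNReal.ofReal_add (exp_pos _).le (exp_pos _).le]
  exact ENNReal.ofReal_le_ofReal (le_of_eq (two_mul _).symm)

end AzAux

open MeasureTheory Real

/-- Probabilistic Azuma–Hoeffding inequality for martingales whose increments
admit a coarse deterministic bound and a finer high-probability bound. -/
theorem probabilistic_azuma_hoeffding
    {Ω : Type*} {mΩ : MeasurableSpace Ω} (μ : Measure Ω) [IsProbabilityMeasure μ]
    (ℱ : Filtration ℕ mΩ) (X : ℕ → Ω → ℝ) (hX : Martingale X ℱ μ)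
    (x₀ : ℝ) (hX0 : X 0 = fun _ => x₀)
    (n : ℕ) (b c : ℕ → ℝ) (hb : ∀ i, 0 < b i) (hc : ∀ i, 0 < c i)
    (r : ℝ) (hr0 : 0 ≤ r) (hr1 : r ≤ 1)
    (h1 : ∀ i < n, μ {ω | c i < |X (i+1) ω - X i ω|} ≤ ENNReal.ofReal r)
    (h2 : ∀ i < n, ∀ᵐ ω ∂μ, |X (i+1) ω - X i ω| ≤ b i)
    (h3 : ∀ i < n, b i * Real.sqrt r ≤ c i)
    (δ : ℝ) (hδ0 : 0 < δ) (hδ1 : δ < 1) :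
    μ {ω | Real.sqrt (32 * (∑ i ∈ Finset.range n, (c i)^2) * Real.log (2/δ))
        + (∑ i ∈ Finset.range n, b i * Real.sqrt r) < |X n ω - X 0 ω|}
      < ENNReal.ofReal (δ + 2 * n * Real.sqrt r) := by
  classical
  rcases Nat.eq_zero_or_pos n with hn | hn
  · subst hn
    have hempty : {ω : Ω | Real.sqrt (32 * (∑ i ∈ Finset.range 0, (c i)^2) * Real.log (2/δ))
        + (∑ i ∈ Finset.range 0, b i * Real.sqrt r) < |X 0 ω - X 0 ω|} = ∅ := by
      ext ω
      simp
    rw [hempty, measure_empty]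
    apply ENNReal.ofReal_pos.mpr
    push_cast
    linarith
  -- notation
  set D : ℕ → Ω → ℝ := fun i ω => X (i+1) ω - X i ω with hD
  set A : ℕ → Set Ω := fun i => {ω | c i < |D i ω|} with hA
  set D' : ℕ → Ω → ℝ := fun i => ({ω | |D i ω| ≤ c i}).indicator (D i) with hD'
  set g : ℕ → Ω → ℝ := fun i => μ[D' i | ℱ i] with hgdef
  set Z : ℕ → Ω → ℝ := fun i ω => D' i ω - g i ω with hZ
  have hDm : ∀ i, StronglyMeasurable[ℱ (i+1)] (D i) := fun i =>
    (hX.stronglyAdapted (i+1)).sub ((hX.stronglyAdapted i).mono (ℱ.mono (Nat.le_succ i)))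
  have hDint : ∀ i, Integrable (D i) μ := fun i => (hX.integrable (i+1)).sub (hX.integrable i)
  have hsetm : ∀ i, MeasurableSet[ℱ (i+1)] {ω | |D i ω| ≤ c i} := by
    intro i
    have hm1 : Measurable[ℱ (i+1)] (D i) := (hDm i).measurable
    have hm2 : Measurable[ℱ (i+1)] fun ω => |D i ω| := measurable_abs.comp hm1
    exact hm2 measurableSet_Iic
  have hD'm : ∀ i, StronglyMeasurable[ℱ (i+1)] (D' i) :=
    fun i => (hDm i).indicator (hsetm i)
  have hD'b : ∀ i ω, |D' i ω| ≤ c i := by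
    intro i ω
    by_cases h : ω ∈ {ω | |D i ω| ≤ c i}
    · rw [hD']; simp only [Set.indicator_of_mem h]; exact h
    · rw [hD']; simp only [Set.indicator_of_notMem h, abs_zero]; exact (hc i).le
  have hD'int : ∀ i, Integrable (D' i) μ := fun i =>
    AzAux.integrable_of_bound (((hD'm i).mono (ℱ.le _)).aestronglyMeasurable) (c i)
      (Filter.Eventually.of_forall (hD'b i))
  have hgm : ∀ i, StronglyMeasurable[ℱ i] (g i) := fun i => stronglyMeasurable_condExp
  have hgint : ∀ i, Integrable (g i) μ := fun i => integrable_condExp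
  have hgb : ∀ i, ∀ᵐ ω ∂μ, |g i ω| ≤ c i := fun i =>
    AzAux.abs_condexp_le_const (ℱ.le i) (c i) (hD'int i)
      (Filter.Eventually.of_forall (hD'b i))
  have hZm : ∀ i, StronglyMeasurable[ℱ (i+1)] (Z i) := fun i =>
    (hD'm i).sub ((hgm i).mono (ℱ.mono (Nat.le_succ i)))
  have hZ0 : ∀ i, μ[Z i|ℱ i] =ᵐ[μ] 0 := by
    intro i
    have hzz : Z i = D' i - g i := rfl
    have e1 : μ[Z i|ℱ i] =ᵐ[μ] μ[D' i|ℱ i] - μ[g i|ℱ i] := by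
      rw [hzz]; exact condExp_sub (hD'int i) (hgint i) _
    have e2 : μ[g i|ℱ i] = g i :=
      condExp_of_stronglyMeasurable (ℱ.le i) (hgm i) (hgint i)
    filter_upwards [e1] with ω e1
    rw [Pi.zero_apply, e1, Pi.sub_apply, e2]
    exact sub_self _
  have hZa : ∀ i, ∀ᵐ ω ∂μ, |Z i ω| ≤ 2 * c i := by
    intro i
    filter_upwards [hgb i] with ω h
    calc |Z i ω| ≤ |D' i ω| + |g i ω| := abs_sub _ _
      _ ≤ c i + c i := add_le_add (hD'b i ω) h
      _ = 2 * c i := by ring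
  -- martingale increments have zero conditional expectation
  have hD0 : ∀ i, μ[D i|ℱ i] =ᵐ[μ] 0 := by
    intro i
    have hdd : D i = X (i+1) - X i := rfl
    have e1 : μ[D i|ℱ i] =ᵐ[μ] μ[X (i+1)|ℱ i] - μ[X i|ℱ i] := by
      rw [hdd]; exact condExp_sub (hX.integrable (i+1)) (hX.integrable i) _
    have e2 := hX.condExp_ae_eq (Nat.le_succ i)
    have e3 : μ[X i|ℱ i] = X i :=
      condExp_of_stronglyMeasurable (ℱ.le i) (hX.stronglyAdapted i) (hX.integrable i)
    filter_upwards [e1, e2] with ω e1 e2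
    rw [Pi.zero_apply, e1, Pi.sub_apply, e2, e3, sub_self]
  -- the conditional truncation error
  set hfun : ℕ → Ω → ℝ := fun i => μ[(A i).indicator (fun _ => (1:ℝ))|ℱ i] with hhdef
  have hAmeas : ∀ i, MeasurableSet (A i) :=
    fun i => measurableSet_lt measurable_const ((hDm i).mono (ℱ.le _)).measurable.abs
  have hindint : ∀ i, Integrable ((A i).indicator (fun _ => (1:ℝ))) μ := by
    intro i
    refine AzAux.integrable_of_bound
      ((stronglyMeasurable_const.indicator (hAmeas i)).aestronglyMeasurable) 1 ?_
    refine Filter.Eventually.of_forall fun ω => ?_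
    by_cases h : ω ∈ A i
    · simp [Set.indicator_of_mem h]
    · simp [Set.indicator_of_notMem h]
  have hgE : ∀ i < n, ∀ᵐ ω ∂μ, |g i ω| ≤ b i * hfun i ω := by
    intro i hi
    have hEb : ∀ᵐ ω ∂μ, |D' i ω - D i ω| ≤ b i * (A i).indicator (fun _ => (1:ℝ)) ω := by
      filter_upwards [h2 i hi] with ω hω
      by_cases h : ω ∈ A i
      · have hnot : ω ∉ {ω | |D i ω| ≤ c i} := by
          simp only [hA, Set.mem_setOf_eq] at h
          simp only [Set.mem_setOf_eq]
          exact not_le.mpr h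
        rw [hD']
        simp only [Set.indicator_of_notMem hnot, Set.indicator_of_mem h, zero_sub, abs_neg,
          mul_one]
        exact hω
      · have hyes : ω ∈ {ω | |D i ω| ≤ c i} := by
          simp only [hA, Set.mem_setOf_eq] at h
          simp only [Set.mem_setOf_eq]
          exact not_lt.mp h
        rw [hD']
        simp [Set.indicator_of_mem hyes, Set.indicator_of_notMem h]
    -- g i =ᵐ μ[D' i - D i|ℱ i]
    have hsplit : g i =ᵐ[μ] μ[D' i - D i|ℱ i] := by
      have e1 : μ[D' i - D i|ℱ i] =ᵐ[μ] μ[D' i|ℱ i] - μ[D i|ℱ i] :=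
        condExp_sub (hD'int i) (hDint i) _
      filter_upwards [e1, hD0 i] with ω e1 e2
      rw [e1, Pi.sub_apply, e2, Pi.zero_apply, sub_zero]
    have habs : ∀ᵐ ω ∂μ, |(μ[D' i - D i|ℱ i]) ω| ≤ (μ[(fun ω => b i * (A i).indicator (fun _ => (1:ℝ)) ω)|ℱ i]) ω :=
      AzAux.abs_condexp_le ((hD'int i).sub (hDint i)) ((hindint i).const_mul (b i)) hEb
    have hsmul : μ[(fun ω => b i * (A i).indicator (fun _ => (1:ℝ)) ω)|ℱ i]
        =ᵐ[μ] fun ω => b i * hfun i ω := by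
      have : (fun ω => b i * (A i).indicator (fun _ => (1:ℝ)) ω)
          = b i • ((A i).indicator (fun _ => (1:ℝ))) := by
        funext ω; simp [smul_eq_mul]
      rw [this]
      have := condExp_smul (μ := μ) (m := ℱ i) (b i) ((A i).indicator (fun _ => (1:ℝ)))
      filter_upwards [this] with ω hω
      rw [hω]
      simp [hhdef, smul_eq_mul]
    filter_upwards [hsplit, habs, hsmul] with ω e1 e2 e3
    rw [e1]
    exact e2.trans (le_of_eq e3)
  have hhnn : ∀ i, 0 ≤ᵐ[μ] hfun i := by
    intro i
    refine condExp_nonneg ?_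
    refine Filter.Eventually.of_forall fun ω => ?_
    by_cases h : ω ∈ A i
    · simp [Set.indicator_of_mem h]
    · simp [Set.indicator_of_notMem h]
  have hhint : ∀ i, Integrable (hfun i) μ := fun i => integrable_condExp
  have hhmean : ∀ i < n, ∫ ω, hfun i ω ∂μ ≤ r := by
    intro i hi
    have e1 : ∫ ω, hfun i ω ∂μ = ∫ ω, (A i).indicator (fun _ => (1:ℝ)) ω ∂μ :=
      integral_condExp (ℱ.le i)
    have e2 : ∫ ω, (A i).indicator (fun _ => (1:ℝ)) ω ∂μ = (μ (A i)).toReal := by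
      rw [integral_indicator_const (1:ℝ) (hAmeas i)]
      simp [Measure.real]
    rw [e1, e2]
    have := h1 i hi
    have hAh : A i = {ω | c i < |X (i+1) ω - X i ω|} := rfl
    rw [← hAh] at this
    calc (μ (A i)).toReal ≤ (ENNReal.ofReal r).toReal :=
          ENNReal.toReal_mono ENNReal.ofReal_ne_top this
      _ = r := ENNReal.toReal_ofReal hr0
  -- bad events
  have hBbound : ∀ i < n, μ {ω | b i * Real.sqrt r < |g i ω|} ≤ ENNReal.ofReal (Real.sqrt r) := by
    intro i hi
    have hsub : {ω | b i * Real.sqrt r < |g i ω|}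
        ⊆ {ω | Real.sqrt r < hfun i ω} ∪ {ω | ¬ (|g i ω| ≤ b i * hfun i ω)} := by
      intro ω hω
      simp only [Set.mem_setOf_eq] at hω
      by_cases h : |g i ω| ≤ b i * hfun i ω
      · left
        simp only [Set.mem_setOf_eq]
        have : b i * Real.sqrt r < b i * hfun i ω := lt_of_lt_of_le hω h
        exact lt_of_mul_lt_mul_left this (hb i).le
      · exact Or.inr h
    have hnull : μ {ω | ¬ (|g i ω| ≤ b i * hfun i ω)} = 0 := ae_iff.mp (hgE i hi)
    have hmarkov : μ {ω | Real.sqrt r < hfun i ω} ≤ ENNReal.ofReal (Real.sqrt r) := by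
      rcases lt_or_eq_of_le hr0 with hrpos | hrzero
      · have hsq : 0 < Real.sqrt r := Real.sqrt_pos.mpr hrpos
        have hmar := mul_meas_ge_le_integral_of_nonneg (hhnn i) (hhint i) (Real.sqrt r)
        have h4 : (μ {ω | Real.sqrt r ≤ hfun i ω}).toReal ≤ Real.sqrt r := by
          have hmr : Real.sqrt r * (μ {ω | Real.sqrt r ≤ hfun i ω}).toReal ≤ r :=
            hmar.trans (hhmean i hi)
          nlinarith [Real.mul_self_sqrt hr0,
            ENNReal.toReal_nonneg (a := μ {ω | Real.sqrt r ≤ hfun i ω})]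
        calc μ {ω | Real.sqrt r < hfun i ω}
            ≤ μ {ω | Real.sqrt r ≤ hfun i ω} :=
              measure_mono (by intro ω h; simp only [Set.mem_setOf_eq] at h ⊢; exact le_of_lt h)
          _ = ENNReal.ofReal (μ {ω | Real.sqrt r ≤ hfun i ω}).toReal :=
              (ENNReal.ofReal_toReal (measure_ne_top μ _)).symm
          _ ≤ ENNReal.ofReal (Real.sqrt r) := ENNReal.ofReal_le_ofReal h4
      · subst hrzero
        have hint0 : ∫ ω, hfun i ω ∂μ = 0 :=
          le_antisymm (by simpa using hhmean i hi) (integral_nonneg_of_ae (hhnn i))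
        have hzero : hfun i =ᵐ[μ] 0 :=
          (integral_eq_zero_iff_of_nonneg_ae (hhnn i) (hhint i)).mp hint0
        have : μ {ω | Real.sqrt 0 < hfun i ω} = 0 := by
          refine measure_mono_null (fun ω h => ?_) (ae_iff.mp hzero)
          simp only [Real.sqrt_zero, Set.mem_setOf_eq] at h ⊢
          exact ne_of_gt h
        rw [this]
        exact zero_le
    calc μ {ω | b i * Real.sqrt r < |g i ω|}
        ≤ μ ({ω | Real.sqrt r < hfun i ω} ∪ {ω | ¬ (|g i ω| ≤ b i * hfun i ω)}) :=
          measure_mono hsub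
      _ ≤ μ {ω | Real.sqrt r < hfun i ω} + μ {ω | ¬ (|g i ω| ≤ b i * hfun i ω)} :=
          measure_union_le _ _
      _ ≤ ENNReal.ofReal (Real.sqrt r) := by
          rw [hnull, add_zero]
          exact hmarkov
  have hAbound : ∀ i < n, μ (A i) ≤ ENNReal.ofReal (Real.sqrt r) := by
    intro i hi
    refine (h1 i hi).trans (ENNReal.ofReal_le_ofReal ?_)
    nlinarith [Real.mul_self_sqrt hr0, Real.sqrt_nonneg r, Real.sqrt_le_one.mpr hr1]
  set N : Set Ω := ⋃ i ∈ Finset.range n, (A i ∪ {ω | b i * Real.sqrt r < |g i ω|}) with hN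
  have hNbound : μ N ≤ ENNReal.ofReal (2 * n * Real.sqrt r) := by
    calc μ N ≤ ∑ i ∈ Finset.range n, μ (A i ∪ {ω | b i * Real.sqrt r < |g i ω|}) :=
          measure_biUnion_finset_le _ _
      _ ≤ ∑ i ∈ Finset.range n, (ENNReal.ofReal (Real.sqrt r) + ENNReal.ofReal (Real.sqrt r)) := by
          refine Finset.sum_le_sum fun i hi => ?_
          refine (measure_union_le _ _).trans ?_
          exact add_le_add (hAbound i (Finset.mem_range.mp hi)) (hBbound i (Finset.mem_range.mp hi))
      _ = n • (ENNReal.ofReal (Real.sqrt r) + ENNReal.ofReal (Real.sqrt r)) := by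
          rw [Finset.sum_const, Finset.card_range]
      _ = ENNReal.ofReal (2 * n * Real.sqrt r) := by
          rw [← ENNReal.ofReal_add (Real.sqrt_nonneg r) (Real.sqrt_nonneg r)]
          rw [nsmul_eq_mul]
          rw [← ENNReal.ofReal_natCast n, ← ENNReal.ofReal_mul (Nat.cast_nonneg n)]
          congr 1
          ring
  -- Azuma bound
  set L : ℝ := Real.log (2/δ) with hL
  set A' : ℝ := ∑ i ∈ Finset.range n, (c i)^2 with hA'
  set t : ℝ := Real.sqrt (32 * A' * L) with ht
  have hA'pos : 0 < A' := by
    rw [hA']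
    apply Finset.sum_pos (fun i _ => pow_pos (hc i) 2)
    exact ⟨0, Finset.mem_range.mpr hn⟩
  have hLpos : 0 < L := Real.log_pos (by rw [lt_div_iff₀ hδ0]; linarith)
  have htpos : 0 < t := Real.sqrt_pos.mpr (by positivity)
  have hazuma := AzAux.azuma_two_sided (μ := μ) ℱ Z (fun i => 2 * c i)
    (fun i => by show (0:ℝ) < 2 * c i; linarith [hc i]) hZm hZ0 hZa n t htpos
  -- simplify the azuma exponent
  have hexp : 2 * Real.exp (-(t^2) / (2 * ∑ i ∈ Finset.range n, (2 * c i)^2)) = δ^4 / 8 := by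
    have hsum : ∑ i ∈ Finset.range n, (2 * c i)^2 = 4 * A' := by
      rw [hA', Finset.mul_sum]
      exact Finset.sum_congr rfl fun i _ => by ring
    have ht2 : t^2 = 32 * A' * L := Real.sq_sqrt (by positivity)
    rw [hsum, ht2]
    have harg : -(32 * A' * L) / (2 * (4 * A')) = -(4 * L) := by
      field_simp
      ring
    rw [harg]
    have hexpL : Real.exp L = 2/δ := Real.exp_log (by positivity)
    have h4 : Real.exp (4 * L) = (2/δ)^4 := by
      rw [show (4:ℝ) * L = ((4:ℕ):ℝ) * L by norm_num, Real.exp_nat_mul, hexpL]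
    rw [show -(4 * L) = -(4 * L) from rfl, Real.exp_neg, h4]
    rw [div_pow]
    field_simp
    ring
  -- main inclusion
  have hincl : {ω | t + (∑ i ∈ Finset.range n, b i * Real.sqrt r) < |X n ω - X 0 ω|}
      ⊆ {ω | t < |∑ i ∈ Finset.range n, Z i ω|} ∪ N := by
    intro ω hω
    simp only [Set.mem_setOf_eq] at hω
    by_cases hωN : ω ∈ N
    · exact Or.inr hωN
    left
    simp only [Set.mem_setOf_eq]
    have hnot : ∀ i < n, ω ∉ A i ∧ ¬ (b i * Real.sqrt r < |g i ω|) := by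
      intro i hi
      constructor
      · intro hmem
        exact hωN (Set.mem_biUnion (Finset.mem_range.mpr hi) (Or.inl hmem))
      · intro hmem
        exact hωN (Set.mem_biUnion (Finset.mem_range.mpr hi) (Or.inr hmem))
    have htel : X n ω - X 0 ω = ∑ i ∈ Finset.range n, D i ω := by
      rw [hD]
      exact (Finset.sum_range_sub (fun i => X i ω) n).symm
    have hDD' : ∀ i < n, D i ω = D' i ω := by
      intro i hi
      have := (hnot i hi).1
      have hmem : ω ∈ {ω | |D i ω| ≤ c i} := by
        simp only [hA, Set.mem_setOf_eq] at this
        simp only [Set.mem_setOf_eq]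
        exact not_lt.mp this
      rw [hD']
      simp [Set.indicator_of_mem hmem]
    have hsum : X n ω - X 0 ω = (∑ i ∈ Finset.range n, Z i ω) + ∑ i ∈ Finset.range n, g i ω := by
      rw [htel, ← Finset.sum_add_distrib]
      refine Finset.sum_congr rfl fun i hi => ?_
      rw [hDD' i (Finset.mem_range.mp hi), hZ]
      ring
    have hgsum : |∑ i ∈ Finset.range n, g i ω| ≤ ∑ i ∈ Finset.range n, b i * Real.sqrt r := by
      calc |∑ i ∈ Finset.range n, g i ω| ≤ ∑ i ∈ Finset.range n, |g i ω| :=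
            Finset.abs_sum_le_sum_abs _ _
        _ ≤ ∑ i ∈ Finset.range n, b i * Real.sqrt r :=
            Finset.sum_le_sum fun i hi => not_lt.mp (hnot i (Finset.mem_range.mp hi)).2
    have : |X n ω - X 0 ω| ≤ |∑ i ∈ Finset.range n, Z i ω| + ∑ i ∈ Finset.range n, b i * Real.sqrt r := by
      rw [hsum]
      exact (abs_add_le _ _).trans (by linarith)
    linarith
  -- final computation
  calc μ {ω | t + (∑ i ∈ Finset.range n, b i * Real.sqrt r) < |X n ω - X 0 ω|}
      ≤ μ ({ω | t < |∑ i ∈ Finset.range n, Z i ω|} ∪ N) := measure_mono hincl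
    _ ≤ μ {ω | t < |∑ i ∈ Finset.range n, Z i ω|} + μ N := measure_union_le _ _
    _ ≤ ENNReal.ofReal (δ^4/8) + ENNReal.ofReal (2 * n * Real.sqrt r) := by
        refine add_le_add ?_ hNbound
        refine hazuma.trans (le_of_eq ?_)
        rw [← hexp]
    _ = ENNReal.ofReal (δ^4/8 + 2 * n * Real.sqrt r) := by
        rw [← ENNReal.ofReal_add (by positivity) (by positivity)]
    _ < ENNReal.ofReal (δ + 2 * n * Real.sqrt r) := by
        rw [ENNReal.ofReal_lt_ofReal_iff (by positivity)]
        have hδ4 : δ^4 ≤ δ := by nlinarith [pow_le_one₀ hδ0.le hδ1.le (n := 3)]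
        linarith
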